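/- For integers m ≥ 0, n ≥ 1 and any parameter μ ∈ ℝ, the generalised Laguerre polynomial admits the following determinant representations (all determinants over indices j,k = 0,…,n−1): T_{m,n}^{(μ)}(z) = det[L_{m+n}^{(μ+j+k+1)}(z)] = det[L_{m+n−j−k}^{(μ+2n−1)}(z)] = det[L_{m+2−n+j+k}^{(μ+2n−1)}(z)] = (−1)^{⌊n/2⌋} det[L_{m+j+1}^{(μ+n+k)}(z)] = (−1)^{⌊n/2⌋} det[L_{m+1+j−k}^{(μ+2n−1)}(z)], where L_n^{(α)} = 0 whenever n < 0. -/

import Mathlib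

noncomputable section

open Finset

/-- Generalized binomial coefficient `C(x, k)` for real `x`. -/
def genBinom (x : ℝ) (k : ℕ) : ℝ :=
  (∏ i ∈ Finset.range k, (x - i)) / (Nat.factorial k)

/-- Associated Laguerre polynomial `L_n^{(α)}(z)`, with the convention `L_n^{(α)} = 0` for `n < 0`. -/
def lagL (n : ℤ) (α : ℝ) : ℝ → ℝ := fun z =>
  if n < 0 then 0
  else ∑ k ∈ Finset.range (n.toNat + 1),
    (-1 : ℝ) ^ k * genBinom ((n : ℝ) + α) (n.toNat - k) * z ^ k / (Nat.factorial k)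

/-- Generalised Laguerre polynomial
`T_{m,n}^{(μ)}(z) = det[(d/dz)^{j+k} L_{m+n}^{(μ+1)}(z)]_{j,k=0}^{n-1}`
(with `T_{m,0}^{(μ)} = 1`, the empty determinant). -/
def genLag (m : ℤ) (n : ℕ) (μ : ℝ) : ℝ → ℝ := fun z =>
  Matrix.det (Matrix.of fun j k : Fin n =>
    iteratedDeriv ((j : ℕ) + (k : ℕ)) (lagL (m + n) (μ + 1)) z)

/-- Wronskian `Wr(f_1, …, f_r)(z) = det[(d/dz)^{j-1} f_k(z)]`. -/
def wronskian {r : ℕ} (f : Fin r → ℝ → ℝ) : ℝ → ℝ := fun z =>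
  Matrix.det (Matrix.of fun j k : Fin r => iteratedDeriv (j : ℕ) (f k) z)

/-- The constant `c_{m,n} = (-1)^{n(2m+1+n)/2} ∏_{j=1}^n (j-1)!/(m+j)!`. -/
def cmn (m n : ℕ) : ℝ :=
  (-1 : ℝ) ^ (n * (2 * m + 1 + n) / 2) *
    ∏ j ∈ Finset.range n, (Nat.factorial j : ℝ) / (Nat.factorial (m + j + 1))

/-- `τ_{m,n}^{(μ)}(z) = det[(z d/dz)^{j+k} L_{m+n}^{(n+μ)}(z)]_{j,k=0}^{n-1}`. -/
def tauP (m : ℤ) (n : ℕ) (μ : ℝ) : ℝ → ℝ := fun z =>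
  Matrix.det (Matrix.of fun j k : Fin n =>
    ((fun (g : ℝ → ℝ) => fun t => t * deriv g t)^[(j : ℕ) + (k : ℕ)]
      (lagL (m + n) ((n : ℝ) + μ))) z)

/-- Hirota bilinear operator `D_z(f • g) = f' g - f g'`. -/
def hirota (f g : ℝ → ℝ) (z : ℝ) : ℝ := deriv f z * g z - f z * deriv g z

/-- Probabilists' Hermite polynomial `He_n` as a real function. -/
def He (n : ℕ) : ℝ → ℝ := fun z => Polynomial.aeval z (Polynomial.hermite n)

/-- The fifth Painlevé equation (with `δ = -1/2`) for `w` with parameters `(a, b, c)`,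
holding at the point `z`. -/
def PV (a b c : ℝ) (w : ℝ → ℝ) (z : ℝ) : Prop :=
  iteratedDeriv 2 w z =
    (1 / (2 * w z) + 1 / (w z - 1)) * (deriv w z) ^ 2
      - (1 / z) * deriv w z
      + (w z - 1) ^ 2 * (a * (w z) ^ 2 + b) / (z ^ 2 * w z)
      + c * w z / z
      - w z * (w z + 1) / (2 * (w z - 1))

/-- The Jimbo–Miwa–Okamoto `σ`-equation `S_V` with parameters `(ν₁, ν₂, ν₃)`,
holding at the point `z`. -/
def SV (ν₁ ν₂ ν₃ : ℝ) (σ : ℝ → ℝ) (z : ℝ) : Prop :=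
  (z * iteratedDeriv 2 σ z) ^ 2 =
    (2 * (deriv σ z) ^ 2 + (ν₁ + ν₂ + ν₃ - z) * deriv σ z + σ z) ^ 2
      - 4 * deriv σ z * (deriv σ z + ν₁) * (deriv σ z + ν₂) * (deriv σ z + ν₃)

section Aux
lemma genBinom_zero (x : ℝ) : genBinom x 0 = 1 := by simp [genBinom]

lemma genBinom_pascal (x : ℝ) (k : ℕ) :
    genBinom (x + 1) (k + 1) = genBinom x (k + 1) + genBinom x k := by
  unfold genBinom
  rw [Finset.prod_range_succ' (fun i => x + 1 - (i:ℝ))]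
  rw [Finset.prod_range_succ (fun i => x - (i:ℝ))]
  have h1 : ∀ i ∈ Finset.range k, x + 1 - ((i:ℕ)+1:ℕ) = x - i := by
    intro i _; push_cast; ring
  rw [Finset.prod_congr rfl h1]
  have h2 : (Nat.factorial (k+1) : ℝ) = (k+1) * Nat.factorial k := by
    push_cast [Nat.factorial_succ]; ring
  have h3 : (Nat.factorial k : ℝ) ≠ 0 := Nat.cast_ne_zero.mpr (Nat.factorial_ne_zero k)
  have h4 : ((k:ℝ)+1) ≠ 0 := by positivity
  rw [h2]
  field_simp
  ring

lemma lagL_coe (M : ℕ) (α : ℝ) : lagL (M:ℤ) α = fun z =>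
    ∑ k ∈ Finset.range (M+1),
      (-1 : ℝ) ^ k * genBinom ((M:ℝ) + α) (M - k) * z ^ k / (Nat.factorial k) := by
  unfold lagL
  have h : ¬ ((M:ℤ) < 0) := by omega
  simp [h]

lemma lagL_neg {n : ℤ} (h : n < 0) (α : ℝ) : lagL n α = fun _ => 0 := by
  unfold lagL; simp [h]
end Aux
lemma lagL_rec (n : ℤ) (α : ℝ) (z : ℝ) :
    lagL n α z = lagL n (α+1) z - lagL (n-1) (α+1) z := by
  rcases lt_or_ge n 0 with h | h
  · rw [lagL_neg h, lagL_neg h, lagL_neg (show n-1 < 0 by omega)]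
    simp
  · obtain ⟨M, rfl⟩ := Int.eq_ofNat_of_zero_le h
    cases M with
    | zero =>
      rw [show ((0:ℕ):ℤ) - 1 = -1 by norm_num, lagL_neg (show (-1:ℤ) < 0 by norm_num)]
      rw [lagL_coe, lagL_coe]
      simp [genBinom_zero]
    | succ M =>
      rw [show (((M+1:ℕ)):ℤ) - 1 = (M:ℤ) by push_cast; ring]
      rw [lagL_coe, lagL_coe, lagL_coe]
      beta_reduce
      rw [Finset.sum_range_succ, Finset.sum_range_succ (n := M+1)]
      have e1 : ((M+1:ℕ):ℝ) + α + 1 = ((M+1:ℕ):ℝ) + (α+1) := by ring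
      have e2 : (M:ℝ) + (α+1) = ((M+1:ℕ):ℝ) + α := by push_cast; ring
      rw [e2]
      have key : ∀ k ∈ Finset.range (M+1),
          (-1:ℝ)^k * genBinom (((M+1:ℕ):ℝ) + (α+1)) (M+1-k) * z^k / (Nat.factorial k)
            - (-1:ℝ)^k * genBinom (((M+1:ℕ):ℝ) + α) (M-k) * z^k / (Nat.factorial k)
          = (-1:ℝ)^k * genBinom (((M+1:ℕ):ℝ) + α) (M+1-k) * z^k / (Nat.factorial k) := by
        intro k hk
        rw [Finset.mem_range] at hk
        have hsub : M + 1 - k = (M - k) + 1 := by omega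
        rw [hsub, ← e1, genBinom_pascal]
        ring
      rw [← Finset.sum_congr rfl key, Finset.sum_sub_distrib]
      simp [genBinom_zero]
      ring
lemma deriv_lagL (n : ℤ) (α : ℝ) : deriv (lagL n α) = fun z => -(lagL (n-1) (α+1) z) := by
  rcases lt_or_ge n 0 with h | h
  · rw [lagL_neg h, lagL_neg (show n-1 < 0 by omega)]
    funext z; simp
  · obtain ⟨M, rfl⟩ := Int.eq_ofNat_of_zero_le h
    funext z
    have hd : HasDerivAt (lagL (M:ℤ) α)
        (∑ k ∈ Finset.range (M+1),
          (-1:ℝ)^k * genBinom ((M:ℝ)+α) (M-k) * ((k:ℝ) * z^(k-1)) / (Nat.factorial k)) z := by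
      rw [lagL_coe]
      exact HasDerivAt.fun_sum fun k _ =>
        ((hasDerivAt_pow k z).const_mul ((-1:ℝ)^k * genBinom ((M:ℝ)+α) (M-k))).div_const _
    rw [hd.deriv]
    rw [Finset.sum_range_succ']
    cases M with
    | zero => simp [lagL_neg (show (-1:ℤ) < 0 by norm_num)]
    | succ M =>
      rw [show ((M+1:ℕ):ℤ) - 1 = ((M:ℕ):ℤ) by push_cast; ring, lagL_coe]
      beta_reduce
      have h0 : (-1:ℝ)^0 * genBinom (((M+1:ℕ)):ℝ) (M+1-0) * ((0:ℕ) * z^(0-1)) / (Nat.factorial 0) = 0 := by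
        norm_num
      norm_num
      rw [← Finset.sum_neg_distrib]
      apply Finset.sum_congr rfl
      intro k _
      have hidx : M+1-(k+1) = M-k := by omega
      have hfac : (Nat.factorial (k+1) : ℝ) = ((k:ℝ)+1) * (Nat.factorial k) := by
        push_cast [Nat.factorial_succ]; ring
      have h3 : (Nat.factorial k : ℝ) ≠ 0 := Nat.cast_ne_zero.mpr (Nat.factorial_ne_zero k)
      have h4 : ((k:ℝ)+1) ≠ 0 := by positivity
      rw [hidx, hfac]
      push_cast
      rw [pow_succ]
      field_simp
      ring
lemma iteratedDeriv_lagL (t : ℕ) (n : ℤ) (α : ℝ) :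
    iteratedDeriv t (lagL n α) = fun z => (-1:ℝ)^t * lagL (n - t) (α + t) z := by
  induction t generalizing n α with
  | zero => funext z; simp
  | succ t ih =>
    rw [iteratedDeriv_succ', deriv_lagL]
    funext z
    rw [iteratedDeriv_fun_neg, ih]
    have e1 : n - 1 - (t:ℤ) = n - ((t+1:ℕ):ℤ) := by push_cast; ring
    have e2 : α + 1 + (t:ℝ) = α + ((t+1:ℕ):ℝ) := by push_cast; ring
    rw [e1, e2, pow_succ]
    ring
lemma pascal_sum_helper (r : ℕ) (f : ℕ → ℝ) :
    ∑ i ∈ Finset.range (r+1), (-1:ℝ)^i * (r.choose i : ℝ) * (f i - f (i+1))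
      = ∑ i ∈ Finset.range (r+2), (-1:ℝ)^i * ((r+1).choose i : ℝ) * f i := by
  have hA : ∑ i ∈ Finset.range (r+1), (-1:ℝ)^i * (r.choose i : ℝ) * f i
      = (∑ i ∈ Finset.range (r+1), (-1:ℝ)^(i+1) * (r.choose (i+1) : ℝ) * f (i+1))
        + (-1:ℝ)^0 * (r.choose 0 : ℝ) * f 0 := by
    have h1 := Finset.sum_range_succ' (fun i => (-1:ℝ)^i * (r.choose i : ℝ) * f i) (r+1)
    have h2 := Finset.sum_range_succ (fun i => (-1:ℝ)^i * (r.choose i : ℝ) * f i) (r+1)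
    simp only [Nat.choose_succ_self, Nat.cast_zero, mul_zero, zero_mul, add_zero] at h2
    rw [h2] at h1
    exact h1
  simp only [mul_sub]
  rw [Finset.sum_sub_distrib, hA, Finset.sum_range_succ' _ (r+1)]
  rw [add_sub_right_comm, ← Finset.sum_sub_distrib]
  congr 1
  · apply Finset.sum_congr rfl
    intro i _
    rw [Nat.choose_succ_succ]
    push_cast
    ring
  · simp

lemma pascal_sum_helper' (r : ℕ) (f : ℕ → ℝ) :
    ∑ i ∈ Finset.range (r+1), (r.choose i : ℝ) * (f i + f (i+1))
      = ∑ i ∈ Finset.range (r+2), ((r+1).choose i : ℝ) * f i := by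
  have hA : ∑ i ∈ Finset.range (r+1), (r.choose i : ℝ) * f i
      = (∑ i ∈ Finset.range (r+1), (r.choose (i+1) : ℝ) * f (i+1))
        + (r.choose 0 : ℝ) * f 0 := by
    have h1 := Finset.sum_range_succ' (fun i => (r.choose i : ℝ) * f i) (r+1)
    have h2 := Finset.sum_range_succ (fun i => (r.choose i : ℝ) * f i) (r+1)
    simp only [Nat.choose_succ_self, Nat.cast_zero, zero_mul, add_zero] at h2
    rw [h2] at h1
    exact h1
  simp only [mul_add]
  rw [Finset.sum_add_distrib, hA, Finset.sum_range_succ' _ (r+1)]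
  rw [add_right_comm, ← Finset.sum_add_distrib]
  congr 1
  · apply Finset.sum_congr rfl
    intro i _
    rw [Nat.choose_succ_succ]
    push_cast
    ring
  · simp

lemma lagL_lower (r : ℕ) (N : ℤ) (α : ℝ) (z : ℝ) :
    lagL N α z
      = ∑ i ∈ Finset.range (r+1), (-1:ℝ)^i * (r.choose i : ℝ) * lagL (N - i) (α + r) z := by
  induction r with
  | zero => simp
  | succ r ih =>
    rw [ih]
    have step : ∀ i ∈ Finset.range (r+1),
        (-1:ℝ)^i * (r.choose i : ℝ) * lagL (N - i) (α + r) z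
        = (-1:ℝ)^i * (r.choose i : ℝ) *
            ((fun j : ℕ => lagL (N - j) (α + r + 1) z) i
              - (fun j : ℕ => lagL (N - j) (α + r + 1) z) (i+1)) := by
      intro i _
      have harg : N - (i:ℤ) - 1 = N - ((i+1:ℕ):ℤ) := by push_cast; ring
      simp only []
      rw [lagL_rec (N - i) (α + r) z, harg]
    rw [Finset.sum_congr rfl step, pascal_sum_helper r (fun j => lagL (N - j) (α + r + 1) z)]
    apply Finset.sum_congr rfl
    intro i _
    have : α + (r:ℝ) + 1 = α + ((r+1:ℕ):ℝ) := by push_cast; ring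
    rw [this]

lemma lagL_raise (t : ℕ) (N : ℤ) (α : ℝ) (z : ℝ) :
    lagL N (α + t) z
      = ∑ s ∈ Finset.range (t+1), (t.choose s : ℝ) * lagL (N - s) (α + s) z := by
  induction t generalizing α with
  | zero => simp
  | succ t ih =>
    have e1 : α + ((t+1:ℕ):ℝ) = (α + 1) + (t:ℝ) := by push_cast; ring
    rw [e1, ih (α+1)]
    have step : ∀ s ∈ Finset.range (t+1),
        (t.choose s : ℝ) * lagL (N - s) (α + 1 + s) z
        = (t.choose s : ℝ) *
            ((fun j : ℕ => lagL (N - j) (α + j) z) s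
              + (fun j : ℕ => lagL (N - j) (α + j) z) (s+1)) := by
      intro s _
      simp only []
      have h1 : N - (s:ℤ) - 1 = N - ((s+1:ℕ):ℤ) := by push_cast; ring
      have h2 : α + (s:ℝ) + 1 = α + ((s+1:ℕ):ℝ) := by push_cast; ring
      have h3 : α + 1 + (s:ℝ) = α + (s:ℝ) + 1 := by ring
      rw [h3, ← h1, ← h2]
      rw [lagL_rec (N - s) (α + s) z]
      ring
    rw [Finset.sum_congr rfl step, pascal_sum_helper' t (fun j => lagL (N - j) (α + j) z)]
lemma revPerm_decompose (n : ℕ) :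
    (Fin.revPerm : Equiv.Perm (Fin (n+1)))
      = Equiv.Perm.decomposeFin.symm (Fin.last n, Fin.revPerm * finRotate n) := by
  ext i
  refine Fin.cases ?_ (fun x => ?_) i
  · simp [Fin.rev_zero]
  · rw [Equiv.Perm.decomposeFin_symm_apply_succ]
    cases n with
    | zero => exact absurd x.2 (by omega)
    | succ n' =>
      simp only [Fin.revPerm_apply, Equiv.Perm.mul_apply]
      rcases eq_or_ne x (Fin.last n') with rfl | hx
      · rw [finRotate_last]
        simp [Fin.rev_zero, Fin.succ_last, Fin.rev_last, Equiv.swap_apply_right]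
      · have hval : ((finRotate (n'+1)) x : ℕ) = (x:ℕ) + 1 := by
          rw [finRotate_succ_apply, Fin.val_add_one, if_neg hx]
        have hxlt : (x:ℕ) < n' := by
          rcases Nat.lt_or_ge (x:ℕ) n' with h | h
          · exact h
          · exact absurd (Fin.ext (by omega : (x:ℕ) = n')) hx
        have h0 : ((((finRotate (n'+1)) x).rev).succ : ℕ) = n' + 1 - ((x:ℕ)+1) := by
          rw [Fin.val_succ, Fin.val_rev, hval]; omega
        rw [Equiv.swap_apply_of_ne_of_ne]
        · rw [Fin.val_rev, Fin.val_succ, h0]; omega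
        · exact fun hc => (Fin.succ_ne_zero _) hc
        · intro hc; rw [Fin.ext_iff] at hc; rw [h0] at hc
          simp only [Fin.val_last] at hc; omega

lemma sign_revPerm (n : ℕ) :
    ((Equiv.Perm.sign (Fin.revPerm : Equiv.Perm (Fin n)) : ℤˣ) : ℤ) = (-1:ℤ)^(n/2) := by
  induction n with
  | zero =>
    have h1 : (Fin.revPerm : Equiv.Perm (Fin 0)) = 1 := Subsingleton.elim _ _
    rw [h1]; simp
  | succ n ih =>
    rw [revPerm_decompose, Equiv.Perm.decomposeFin.symm_sign, map_mul]
    cases n with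
    | zero =>
      have h1 : (Fin.revPerm : Equiv.Perm (Fin 0)) = 1 := Subsingleton.elim _ _
      have h2 : (finRotate 0) = 1 := rfl
      rw [h1, h2]
      simp
    | succ n' =>
      rw [sign_finRotate]
      have hlast : (Fin.last (n'+1)) ≠ 0 := by
        intro hc; rw [Fin.ext_iff] at hc; simp at hc
      rw [if_neg hlast]
      push_cast
      rw [ih]
      have key : (-1:ℤ) * ((-1:ℤ)^((n'+1+1)/2)) = (-1:ℤ)^((n'+1)/2) * (-1:ℤ)^n' := by
        have e1 : (-1:ℤ)^((n'+1)/2) * (-1:ℤ)^n' = (-1:ℤ)^((n'+1)/2 + n') := (pow_add _ _ _).symm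
        have e2 : (-1:ℤ) * ((-1:ℤ)^((n'+1+1)/2)) = (-1:ℤ)^(1 + (n'+1+1)/2) := by
          rw [pow_add]; ring
        rw [e1, e2, neg_one_pow_eq_pow_mod_two, neg_one_pow_eq_pow_mod_two (n := (n'+1)/2 + n')]
        congr 1
        rcases Nat.even_or_odd n' with ⟨b, rfl⟩ | ⟨b, rfl⟩ <;> omega
      rw [← key]
      ring
def Pmat (n : ℕ) : Matrix (Fin n) (Fin n) ℝ :=
  Matrix.of fun j s => (((j:ℕ).choose (s:ℕ) : ℕ) : ℝ)

def Qmat (n : ℕ) : Matrix (Fin n) (Fin n) ℝ :=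
  Matrix.of fun j l => if (j:ℕ) ≤ (l:ℕ) then
    (-1:ℝ)^((l:ℕ)-(j:ℕ)) * (((n-1-(j:ℕ)).choose ((l:ℕ)-(j:ℕ)) : ℕ) : ℝ) else 0

lemma det_Pmat (n : ℕ) : (Pmat n).det = 1 := by
  rw [Matrix.det_of_lowerTriangular (Pmat n)
    (by intro i j hij
        have : (i:ℕ) < (j:ℕ) := hij
        simp only [Pmat, Matrix.of_apply]
        rw [Nat.choose_eq_zero_of_lt this]
        simp)]
  apply Finset.prod_eq_one
  intro j _
  simp [Pmat]

lemma det_Qmat (n : ℕ) : (Qmat n).det = 1 := by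
  rw [Matrix.det_of_upperTriangular
    (by intro i j hij
        have h : ¬ ((i:ℕ) ≤ (j:ℕ)) := by
          have : (j:ℕ) < (i:ℕ) := hij
          omega
        simp only [Qmat, Matrix.of_apply]
        rw [if_neg h])]
  apply Finset.prod_eq_one
  intro j _
  simp [Qmat]

lemma fin_sum_choose {n : ℕ} (j : Fin n) (g : ℕ → ℝ) :
    ∑ s : Fin n, (((j:ℕ).choose (s:ℕ) : ℕ) : ℝ) * g (s:ℕ)
      = ∑ s ∈ Finset.range ((j:ℕ)+1), (((j:ℕ).choose s : ℕ) : ℝ) * g s := by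
  rw [Fin.sum_univ_eq_sum_range (fun s => (((j:ℕ).choose s : ℕ) : ℝ) * g s) n]
  apply (Finset.sum_subset ?_ ?_).symm
  · intro s hs
    rw [Finset.mem_range] at *
    have := j.2
    omega
  · intro s _ hs
    rw [Finset.mem_range] at hs
    have : (j:ℕ) < s := by omega
    rw [Nat.choose_eq_zero_of_lt this]
    simp

lemma fin_sum_signed_choose {n : ℕ} (j : Fin n) (g : ℕ → ℝ) :
    ∑ l : Fin n, (if (j:ℕ) ≤ (l:ℕ) then
        (-1:ℝ)^((l:ℕ)-(j:ℕ)) * (((n-1-(j:ℕ)).choose ((l:ℕ)-(j:ℕ)) : ℕ) : ℝ) else 0) * g (l:ℕ)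
      = ∑ i ∈ Finset.range ((n-1-(j:ℕ))+1),
          (-1:ℝ)^i * (((n-1-(j:ℕ)).choose i : ℕ) : ℝ) * g ((j:ℕ)+i) := by
  rw [Fin.sum_univ_eq_sum_range (fun l => (if (j:ℕ) ≤ l then
        (-1:ℝ)^(l-(j:ℕ)) * (((n-1-(j:ℕ)).choose (l-(j:ℕ)) : ℕ) : ℝ) else 0) * g l) n]
  rw [Finset.range_eq_Ico, ← Finset.sum_Ico_consecutive _ (Nat.zero_le (j:ℕ)) (le_of_lt j.2)]
  have h1 : ∑ l ∈ Finset.Ico 0 (j:ℕ), (if (j:ℕ) ≤ l then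
        (-1:ℝ)^(l-(j:ℕ)) * (((n-1-(j:ℕ)).choose (l-(j:ℕ)) : ℕ) : ℝ) else 0) * g l = 0 := by
    apply Finset.sum_eq_zero
    intro l hl
    rw [Finset.mem_Ico] at hl
    rw [if_neg (by omega)]
    simp
  rw [h1, zero_add, Finset.sum_Ico_eq_sum_range]
  have h2 : n - (j:ℕ) = (n-1-(j:ℕ))+1 := by have := j.2; omega
  rw [h2]
  apply Finset.sum_congr rfl
  intro i _
  rw [if_pos (Nat.le_add_right _ _)]
  have h3 : (j:ℕ) + i - (j:ℕ) = i := by omega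
  rw [h3]
lemma lagL_congr {N N' : ℤ} {α α' : ℝ} (hN : N = N') (hα : α = α') (z : ℝ) :
    lagL N α z = lagL N' α' z := by rw [hN, hα]

lemma genLag_eq_detD (m n : ℕ) (μ z : ℝ) :
    genLag (m:ℤ) n μ z
      = Matrix.det (Matrix.of fun j k : Fin n =>
          lagL ((m:ℤ)+n - (j:ℕ) - (k:ℕ)) (μ+(j:ℕ)+(k:ℕ)+1) z) := by
  unfold genLag
  have hent : (Matrix.of fun j k : Fin n => iteratedDeriv ((j:ℕ)+(k:ℕ)) (lagL ((m:ℤ)+n) (μ+1)) z)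
      = Matrix.diagonal (fun j : Fin n => (-1:ℝ)^(j:ℕ))
        * (Matrix.of fun j k : Fin n => lagL ((m:ℤ)+n - (j:ℕ) - (k:ℕ)) (μ+(j:ℕ)+(k:ℕ)+1) z)
        * Matrix.diagonal (fun j : Fin n => (-1:ℝ)^(j:ℕ)) := by
    ext j k
    rw [Matrix.mul_diagonal, Matrix.diagonal_mul]
    simp only [Matrix.of_apply]
    rw [iteratedDeriv_lagL]
    beta_reduce
    rw [lagL_congr (show (m:ℤ)+n - (((j:ℕ)+(k:ℕ) : ℕ) :ℤ) = (m:ℤ)+n - (j:ℕ) - (k:ℕ) by push_cast; ring)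
        (show μ+1 + (((j:ℕ)+(k:ℕ) : ℕ) : ℝ) = μ+(j:ℕ)+(k:ℕ)+1 by push_cast; ring) z]
    rw [pow_add]
    ring
  rw [hent, Matrix.det_mul, Matrix.det_mul, Matrix.det_diagonal]
  have hp : (∏ j : Fin n, (-1:ℝ)^(j:ℕ)) * (∏ j : Fin n, (-1:ℝ)^(j:ℕ)) = 1 := by
    rw [← Finset.prod_mul_distrib]
    apply Finset.prod_eq_one
    intro j _
    rw [← mul_pow]
    norm_num
  calc (∏ j : Fin n, (-1:ℝ)^(j:ℕ))
        * Matrix.det (Matrix.of fun j k : Fin n => lagL ((m:ℤ)+n - (j:ℕ) - (k:ℕ)) (μ+(j:ℕ)+(k:ℕ)+1) z)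
        * (∏ j : Fin n, (-1:ℝ)^(j:ℕ))
      = Matrix.det (Matrix.of fun j k : Fin n => lagL ((m:ℤ)+n - (j:ℕ) - (k:ℕ)) (μ+(j:ℕ)+(k:ℕ)+1) z)
        * ((∏ j : Fin n, (-1:ℝ)^(j:ℕ)) * (∏ j : Fin n, (-1:ℝ)^(j:ℕ))) := by ring
    _ = _ := by rw [hp, mul_one]
lemma detB_eq_detD (m n : ℕ) (μ z : ℝ) :
    Matrix.det (Matrix.of fun j k : Fin n => lagL ((m:ℤ)+n) (μ+(j:ℕ)+(k:ℕ)+1) z)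
      = Matrix.det (Matrix.of fun j k : Fin n =>
          lagL ((m:ℤ)+n-(j:ℕ)-(k:ℕ)) (μ+(j:ℕ)+(k:ℕ)+1) z) := by
  have h1 : (Matrix.of fun j k : Fin n => lagL ((m:ℤ)+n) (μ+(j:ℕ)+(k:ℕ)+1) z)
      = Pmat n * (Matrix.of fun s k : Fin n => lagL ((m:ℤ)+n-(s:ℕ)) (μ+(k:ℕ)+1+(s:ℕ)) z) := by
    ext j k
    rw [Matrix.mul_apply]
    simp only [Pmat, Matrix.of_apply]
    rw [fin_sum_choose j (fun s => lagL ((m:ℤ)+n-(s:ℕ)) (μ+(k:ℕ)+1+(s:ℕ)) z)]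
    rw [← lagL_raise (j:ℕ) ((m:ℤ)+n) (μ+(k:ℕ)+1) z]
    exact lagL_congr rfl (by push_cast; ring) z
  have h2 : (Matrix.of fun s k : Fin n => lagL ((m:ℤ)+n-(s:ℕ)) (μ+(k:ℕ)+1+(s:ℕ)) z)
      = (Matrix.of fun s u : Fin n => lagL ((m:ℤ)+n-(s:ℕ)-(u:ℕ)) (μ+(s:ℕ)+1+(u:ℕ)) z)
        * (Pmat n).transpose := by
    ext s k
    rw [Matrix.mul_apply]
    simp only [Pmat, Matrix.of_apply, Matrix.transpose_apply]
    have hc : ∀ u : Fin n,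
        lagL ((m:ℤ)+n-(s:ℕ)-(u:ℕ)) (μ+(s:ℕ)+1+(u:ℕ)) z * (((k:ℕ).choose (u:ℕ) :ℕ):ℝ)
          = (((k:ℕ).choose (u:ℕ):ℕ):ℝ)
            * (fun u : ℕ => lagL ((m:ℤ)+n-(s:ℕ)-u) (μ+(s:ℕ)+1+u) z) (u:ℕ) :=
      fun u => mul_comm _ _
    rw [Finset.sum_congr rfl (fun u _ => hc u)]
    rw [fin_sum_choose k (fun u => lagL ((m:ℤ)+n-(s:ℕ)-u) (μ+(s:ℕ)+1+u) z)]
    rw [← lagL_raise (k:ℕ) ((m:ℤ)+n-(s:ℕ)) (μ+(s:ℕ)+1) z]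
    exact lagL_congr rfl (by push_cast; ring) z
  rw [h1, h2, Matrix.det_mul, Matrix.det_mul, Matrix.det_transpose, det_Pmat]
  rw [one_mul, mul_one]
  congr 1
  ext j k
  exact lagL_congr rfl (by push_cast; ring) z
lemma detD_eq_detE (m n : ℕ) (μ z : ℝ) :
    Matrix.det (Matrix.of fun j k : Fin n =>
        lagL ((m:ℤ)+n-(j:ℕ)-(k:ℕ)) (μ+(j:ℕ)+(k:ℕ)+1) z)
      = Matrix.det (Matrix.of fun j k : Fin n =>
        lagL ((m:ℤ)+n-(j:ℕ)-(k:ℕ)) (μ+2*n-1) z) := by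
  have h1 : (Matrix.of fun j k : Fin n =>
        lagL ((m:ℤ)+n-(j:ℕ)-(k:ℕ)) (μ+(j:ℕ)+(k:ℕ)+1) z)
      = Qmat n * (Matrix.of fun l k : Fin n =>
        lagL ((m:ℤ)+n-(l:ℕ)-(k:ℕ)) (μ+n+(k:ℕ)) z) := by
    ext j k
    rw [Matrix.mul_apply]
    simp only [Qmat, Matrix.of_apply]
    rw [fin_sum_signed_choose j (fun l => lagL ((m:ℤ)+n-(l:ℕ)-(k:ℕ)) (μ+n+(k:ℕ)) z)]
    rw [lagL_lower (n-1-(j:ℕ)) ((m:ℤ)+n-(j:ℕ)-(k:ℕ)) (μ+(j:ℕ)+(k:ℕ)+1) z]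
    apply Finset.sum_congr rfl
    intro i _
    have hn1 : 1 ≤ n := by have := j.2; omega
    have hj : (j:ℕ) ≤ n-1 := by have := j.2; omega
    have hcast : ((n-1-(j:ℕ) : ℕ) : ℝ) = (n:ℝ) - 1 - ((j:ℕ):ℝ) := by
      rw [Nat.cast_sub hj, Nat.cast_sub (by omega : 1 ≤ n)]
      push_cast; ring
    congr 1
    exact lagL_congr (by push_cast; ring) (by rw [hcast]; push_cast; ring) z
  have h2 : (Matrix.of fun l k : Fin n =>
        lagL ((m:ℤ)+n-(l:ℕ)-(k:ℕ)) (μ+n+(k:ℕ)) z)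
      = (Matrix.of fun j k : Fin n =>
        lagL ((m:ℤ)+n-(j:ℕ)-(k:ℕ)) (μ+2*n-1) z) * (Qmat n).transpose := by
    ext l k
    rw [Matrix.mul_apply]
    simp only [Qmat, Matrix.of_apply, Matrix.transpose_apply]
    have hc : ∀ p : Fin n,
        lagL ((m:ℤ)+n-(l:ℕ)-(p:ℕ)) (μ+2*n-1) z
            * (if (k:ℕ) ≤ (p:ℕ) then
                (-1:ℝ)^((p:ℕ)-(k:ℕ)) * (((n-1-(k:ℕ)).choose ((p:ℕ)-(k:ℕ)) : ℕ) : ℝ) else 0)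
          = (if (k:ℕ) ≤ (p:ℕ) then
                (-1:ℝ)^((p:ℕ)-(k:ℕ)) * (((n-1-(k:ℕ)).choose ((p:ℕ)-(k:ℕ)) : ℕ) : ℝ) else 0)
            * (fun p : ℕ => lagL ((m:ℤ)+n-(l:ℕ)-p) (μ+2*n-1) z) (p:ℕ) :=
      fun p => mul_comm _ _
    rw [Finset.sum_congr rfl (fun p _ => hc p)]
    rw [fin_sum_signed_choose k (fun p => lagL ((m:ℤ)+n-(l:ℕ)-p) (μ+2*n-1) z)]
    rw [lagL_lower (n-1-(k:ℕ)) ((m:ℤ)+n-(l:ℕ)-(k:ℕ)) (μ+n+(k:ℕ)) z]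
    apply Finset.sum_congr rfl
    intro i _
    have hn1 : 1 ≤ n := by have := k.2; omega
    have hk : (k:ℕ) ≤ n-1 := by have := k.2; omega
    have hcast : ((n-1-(k:ℕ) : ℕ) : ℝ) = (n:ℝ) - 1 - ((k:ℕ):ℝ) := by
      rw [Nat.cast_sub hk, Nat.cast_sub (by omega : 1 ≤ n)]
      push_cast; ring
    congr 1
    exact lagL_congr (by push_cast; ring) (by rw [hcast]; push_cast; ring) z
  rw [h1, h2, Matrix.det_mul, Matrix.det_mul, Matrix.det_transpose, det_Qmat]
  ring
lemma detF_eq_detE (m n : ℕ) (μ z : ℝ) :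
    Matrix.det (Matrix.of fun j k : Fin n =>
        lagL ((m:ℤ)+2-n+(j:ℕ)+(k:ℕ)) (μ+2*n-1) z)
      = Matrix.det (Matrix.of fun j k : Fin n =>
        lagL ((m:ℤ)+n-(j:ℕ)-(k:ℕ)) (μ+2*n-1) z) := by
  have h : (Matrix.of fun j k : Fin n => lagL ((m:ℤ)+2-n+(j:ℕ)+(k:ℕ)) (μ+2*n-1) z)
      = (Matrix.of fun j k : Fin n =>
          lagL ((m:ℤ)+n-(j:ℕ)-(k:ℕ)) (μ+2*n-1) z).submatrix Fin.revPerm Fin.revPerm := by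
    ext j k
    simp only [Matrix.submatrix_apply, Matrix.of_apply, Fin.revPerm_apply]
    refine lagL_congr ?_ rfl z
    have hj := j.2
    have hk := k.2
    rw [Fin.val_rev, Fin.val_rev]
    omega
  rw [h, Matrix.det_submatrix_equiv_self]

lemma detE_eq_detH (m n : ℕ) (μ z : ℝ) :
    Matrix.det (Matrix.of fun j k : Fin n =>
        lagL ((m:ℤ)+n-(j:ℕ)-(k:ℕ)) (μ+2*n-1) z)
      = (-1:ℝ)^(n/2) * Matrix.det (Matrix.of fun j k : Fin n =>
        lagL ((m:ℤ)+1+(j:ℕ)-(k:ℕ)) (μ+2*n-1) z) := by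
  have h : (Matrix.of fun j k : Fin n => lagL ((m:ℤ)+1+(j:ℕ)-(k:ℕ)) (μ+2*n-1) z)
      = (Matrix.of fun j k : Fin n =>
          lagL ((m:ℤ)+n-(j:ℕ)-(k:ℕ)) (μ+2*n-1) z).submatrix Fin.revPerm id := by
    ext j k
    simp only [Matrix.submatrix_apply, Matrix.of_apply, Fin.revPerm_apply, id]
    refine lagL_congr ?_ rfl z
    have hj := j.2
    have hk := k.2
    rw [Fin.val_rev]
    omega
  rw [h, Matrix.det_permute]
  have hs : ((Equiv.Perm.sign (Fin.revPerm : Equiv.Perm (Fin n)) : ℤ) : ℝ) = (-1:ℝ)^(n/2) := by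
    rw [sign_revPerm]
    push_cast
    ring
  rw [show ((Equiv.Perm.sign (Fin.revPerm : Equiv.Perm (Fin n)) : ℤ) : ℝ)
        = (-1:ℝ)^(n/2) from hs]
  rw [← mul_assoc, ← mul_pow]
  norm_num

lemma detG_eq_detH (m n : ℕ) (μ z : ℝ) :
    Matrix.det (Matrix.of fun j k : Fin n =>
        lagL ((m:ℤ)+(j:ℕ)+1) (μ+n+(k:ℕ)) z)
      = Matrix.det (Matrix.of fun j k : Fin n =>
        lagL ((m:ℤ)+1+(j:ℕ)-(k:ℕ)) (μ+2*n-1) z) := by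
  have h1 : (Matrix.of fun j k : Fin n => lagL ((m:ℤ)+(j:ℕ)+1) (μ+n+(k:ℕ)) z)
      = (Matrix.of fun j u : Fin n => lagL ((m:ℤ)+1+(j:ℕ)-(u:ℕ)) (μ+n+(u:ℕ)) z)
          * (Pmat n).transpose := by
    ext j k
    rw [Matrix.mul_apply]
    simp only [Pmat, Matrix.of_apply, Matrix.transpose_apply]
    have hc : ∀ u : Fin n,
        lagL ((m:ℤ)+1+(j:ℕ)-(u:ℕ)) (μ+n+(u:ℕ)) z * (((k:ℕ).choose (u:ℕ) :ℕ):ℝ)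
          = (((k:ℕ).choose (u:ℕ):ℕ):ℝ)
            * (fun u : ℕ => lagL ((m:ℤ)+1+(j:ℕ)-u) (μ+n+u) z) (u:ℕ) :=
      fun u => mul_comm _ _
    rw [Finset.sum_congr rfl (fun u _ => hc u)]
    rw [fin_sum_choose k (fun u => lagL ((m:ℤ)+1+(j:ℕ)-u) (μ+n+u) z)]
    rw [← lagL_raise (k:ℕ) ((m:ℤ)+1+(j:ℕ)) (μ+n) z]
    exact lagL_congr (by push_cast; ring) rfl z
  have h2 : (Matrix.of fun j u : Fin n => lagL ((m:ℤ)+1+(j:ℕ)-(u:ℕ)) (μ+n+(u:ℕ)) z)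
      = (Matrix.of fun j k : Fin n => lagL ((m:ℤ)+1+(j:ℕ)-(k:ℕ)) (μ+2*n-1) z)
          * (Qmat n).transpose := by
    ext j u
    rw [Matrix.mul_apply]
    simp only [Qmat, Matrix.of_apply, Matrix.transpose_apply]
    have hc : ∀ l : Fin n,
        lagL ((m:ℤ)+1+(j:ℕ)-(l:ℕ)) (μ+2*n-1) z
            * (if (u:ℕ) ≤ (l:ℕ) then
                (-1:ℝ)^((l:ℕ)-(u:ℕ)) * (((n-1-(u:ℕ)).choose ((l:ℕ)-(u:ℕ)) : ℕ) : ℝ) else 0)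
          = (if (u:ℕ) ≤ (l:ℕ) then
                (-1:ℝ)^((l:ℕ)-(u:ℕ)) * (((n-1-(u:ℕ)).choose ((l:ℕ)-(u:ℕ)) : ℕ) : ℝ) else 0)
            * (fun l : ℕ => lagL ((m:ℤ)+1+(j:ℕ)-l) (μ+2*n-1) z) (l:ℕ) :=
      fun l => mul_comm _ _
    rw [Finset.sum_congr rfl (fun l _ => hc l)]
    rw [fin_sum_signed_choose u (fun l => lagL ((m:ℤ)+1+(j:ℕ)-l) (μ+2*n-1) z)]
    rw [lagL_lower (n-1-(u:ℕ)) ((m:ℤ)+1+(j:ℕ)-(u:ℕ)) (μ+n+(u:ℕ)) z]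
    apply Finset.sum_congr rfl
    intro i _
    have hn1 : 1 ≤ n := by have := u.2; omega
    have hu : (u:ℕ) ≤ n-1 := by have := u.2; omega
    have hcast : ((n-1-(u:ℕ) : ℕ) : ℝ) = (n:ℝ) - 1 - ((u:ℕ):ℝ) := by
      rw [Nat.cast_sub hu, Nat.cast_sub (by omega : 1 ≤ n)]
      push_cast; ring
    congr 1
    exact lagL_congr (by push_cast; ring) (by rw [hcast]; push_cast; ring) z
  rw [h1, h2, Matrix.det_mul, Matrix.det_mul, Matrix.det_transpose, Matrix.det_transpose,
    det_Pmat, det_Qmat]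
  ring
/-- determinant representations of `T_{m,n}^{(μ)}`. -/
theorem genLag_det_representations (m n : ℕ) (hn : 1 ≤ n) (μ : ℝ) (z : ℝ) :
    genLag (m : ℤ) n μ z
        = Matrix.det (Matrix.of fun j k : Fin n =>
            lagL ((m : ℤ) + n) (μ + (j : ℕ) + (k : ℕ) + 1) z)
      ∧ genLag (m : ℤ) n μ z
        = Matrix.det (Matrix.of fun j k : Fin n =>
            lagL ((m : ℤ) + n - (j : ℕ) - (k : ℕ)) (μ + 2 * n - 1) z)
      ∧ genLag (m : ℤ) n μ z
        = Matrix.det (Matrix.of fun j k : Fin n =>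
            lagL ((m : ℤ) + 2 - n + (j : ℕ) + (k : ℕ)) (μ + 2 * n - 1) z)
      ∧ genLag (m : ℤ) n μ z
        = (-1 : ℝ) ^ (n / 2) * Matrix.det (Matrix.of fun j k : Fin n =>
            lagL ((m : ℤ) + (j : ℕ) + 1) (μ + n + (k : ℕ)) z)
      ∧ genLag (m : ℤ) n μ z
        = (-1 : ℝ) ^ (n / 2) * Matrix.det (Matrix.of fun j k : Fin n =>
            lagL ((m : ℤ) + 1 + (j : ℕ) - (k : ℕ)) (μ + 2 * n - 1) z) := by
  have hD := genLag_eq_detD m n μ z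
  refine ⟨?_, ?_, ?_, ?_, ?_⟩
  · rw [hD]
    exact (detB_eq_detD m n μ z).symm
  · rw [hD]
    exact detD_eq_detE m n μ z
  · rw [hD, detD_eq_detE]
    exact (detF_eq_detE m n μ z).symm
  · rw [hD, detD_eq_detE, detE_eq_detH, detG_eq_detH]
  · rw [hD, detD_eq_detE, detE_eq_detH]
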